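/- For ν ∈ (−1,1), ν ≠ 0, define M_ν(z) = (i − cot(πν/2))·(z/i)^ν + cot(πν/2) and N_ν(z) = (i + cot(πν/2))·(z/i)^ν − cot(πν/2) for z in the open upper half-plane, where (z/i)^ν = exp(ν(log z − iπ/2)) with principal log. Then M_ν(−1/z) = N_{−ν}(z) for all z in the open upper half-plane. -/

import Mathlib

open Real Complex

/-- `(z/i)^ν = exp(ν(log z − iπ/2))`, principal branch of `log`. -/
noncomputable def zOverIPow (ν : ℝ) (z : ℂ) : ℂ :=
  Complex.exp (ν * (Complex.log z - Complex.I * π / 2))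

/-- The Weyl–Titchmarsh function `M_ν(z) = (i − cot(πν/2))(z/i)^ν + cot(πν/2)`. -/
noncomputable def Mfun (ν : ℝ) (z : ℂ) : ℂ :=
  (Complex.I - ((Real.cos (π * ν / 2) / Real.sin (π * ν / 2) : ℝ) : ℂ)) * zOverIPow ν z +
    ((Real.cos (π * ν / 2) / Real.sin (π * ν / 2) : ℝ) : ℂ)

/-- The Weyl–Titchmarsh function `N_ν(z) = (i + cot(πν/2))(z/i)^ν − cot(πν/2)`. -/
noncomputable def Nfun (ν : ℝ) (z : ℂ) : ℂ :=
  (Complex.I + ((Real.cos (π * ν / 2) / Real.sin (π * ν / 2) : ℝ) : ℂ)) * zOverIPow ν z -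
    ((Real.cos (π * ν / 2) / Real.sin (π * ν / 2) : ℝ) : ℂ)

theorem log_neg_inv' (z : ℂ) (hz : 0 < z.im) :
    Complex.log (-1/z) = -Complex.log z + π * Complex.I := by
  have hz0 : z ≠ 0 := by intro h; simp [h] at hz
  have him : (z⁻¹).im < 0 := by
    simpa [Complex.inv_im] using
      div_neg_of_neg_of_pos (by linarith) (Complex.normSq_pos.mpr hz0)
  have harg : z.arg ≠ π := by
    intro h
    have := (Complex.arg_eq_pi_iff.mp h).2
    linarith
  have hinv : Complex.log z⁻¹ = -Complex.log z := Complex.log_inv z harg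
  have : Complex.log (-(z⁻¹)) = Complex.log z⁻¹ + π * Complex.I := by
    rw [Complex.log, Complex.log, Complex.arg_neg_eq_arg_add_pi_of_im_neg him,
      norm_neg, Complex.ofReal_add]
    ring
  calc Complex.log (-1/z) = Complex.log (-(z⁻¹)) := by rw [neg_div, one_div]
    _ = -Complex.log z + π * Complex.I := by rw [this, hinv]

theorem zOverIPow_neg_inv (ν : ℝ) (z : ℂ) (hz : 0 < z.im) :
    zOverIPow ν (-1/z) = zOverIPow (-ν) z := by
  unfold zOverIPow
  rw [log_neg_inv' z hz]
  congr 1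
  push_cast
  ring

/-- For `ν ∈ (−1,1)`, `ν ≠ 0`, and `z` in the upper half-plane,
`M_ν(−1/z) = N_{−ν}(z)`. -/
theorem Mfun_neg_inv_eq_Nfun (ν : ℝ) (hν : ν ∈ Set.Ioo (-1 : ℝ) 1) (hν0 : ν ≠ 0)
    (z : ℂ) (hz : 0 < z.im) :
    Mfun ν (-1 / z) = Nfun (-ν) z := by
  unfold Mfun Nfun
  rw [zOverIPow_neg_inv ν z hz]
  have h1 : π * -ν / 2 = -(π * ν / 2) := by ring
  rw [h1, Real.cos_neg, Real.sin_neg, div_neg]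
  push_cast
  ring
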